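/- arXiv:0902.2497 — 5 statements merged into one kernel-verified Lean document; each statement's English description precedes it below -/
import Mathlib

section
/- Let e ≥ 2, and let λ be a partition that is an e-core. Fix a residue x ∈ ℤ/eℤ (with node (i,j) having residue j - i + v mod e for a fixed charge v ∈ ℤ/eℤ). Then λ does not simultaneously have a removable x-node and an addable x-node. -/
open Finset

/-- An `r`-multipartition: a tuple of finitely supported weakly decreasing
sequences of naturals (rows are 0-based). -/
structure MultiPartition (r : ℕ) where
  part : Fin r → ℕ →₀ ℕ
  mono : ∀ s i, part s (i + 1) ≤ part s i

namespace MultiPartition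

variable {r e : ℕ}

/-- total number of nodes -/
def size (l : MultiPartition r) : ℕ := ∑ s, (l.part s).sum fun _ v => v

/-- a position: (component, row), both 0-based -/
abbrev Pos (r : ℕ) := Fin r × ℕ

/-- `Below p q` : the position `p` is strictly below `q`
(larger component index, or equal component and larger row). -/
def Below (p q : Pos r) : Prop := q.1 < p.1 ∨ (p.1 = q.1 ∧ q.2 < p.2)

/-- row `p.2` of component `p.1` carries a removable node -/
def Removable (l : MultiPartition r) (p : Pos r) : Prop :=
  l.part p.1 (p.2 + 1) < l.part p.1 p.2

/-- row `p.2` of component `p.1` carries an addable node -/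
def Addable (l : MultiPartition r) (p : Pos r) : Prop :=
  p.2 = 0 ∨ l.part p.1 p.2 < l.part p.1 (p.2 - 1)

/-- residue of the node in row `i`, column `j` (0-based) of component `s`:
`j - i + v s` in `ZMod e` (for `e = 0` this is `ℤ`). -/
def resNode (v : Fin r → ZMod e) (s : Fin r) (i j : ℕ) : ZMod e :=
  (j : ZMod e) - (i : ZMod e) + v s

/-- residue of the removable node in row `p` -/
def resRem (v : Fin r → ZMod e) (l : MultiPartition r) (p : Pos r) : ZMod e :=
  resNode v p.1 p.2 (l.part p.1 p.2 - 1)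

/-- residue of the addable node in row `p` -/
def resAdd (v : Fin r → ZMod e) (l : MultiPartition r) (p : Pos r) : ZMod e :=
  resNode v p.1 p.2 (l.part p.1 p.2)

/-- `p` is a normal `x`-node of `l`: it is a removable `x`-node, and for every
addable `x`-node `q` below it, there are strictly more removable `x`-nodes than
addable `x`-nodes strictly between `q` and `p`. -/
def Normal (v : Fin r → ZMod e) (l : MultiPartition r) (p : Pos r) (x : ZMod e) : Prop :=
  Removable l p ∧ resRem v l p = x ∧
  ∀ q : Pos r, Addable l q → resAdd v l q = x → Below q p →
    {q' : Pos r | Removable l q' ∧ resRem v l q' = x ∧ Below q' p ∧ Below q q'}.ncard >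
    {q' : Pos r | Addable l q' ∧ resAdd v l q' = x ∧ Below q' p ∧ Below q q'}.ncard

/-- the good `x`-node: the highest normal `x`-node -/
def Good (v : Fin r → ZMod e) (l : MultiPartition r) (p : Pos r) (x : ZMod e) : Prop :=
  Normal v l p x ∧ ∀ q, Normal v l q x → ¬ Below p q

/-- `m` is obtained from `l` by adding one node at the end of row `p.2` of
component `p.1`. -/
def AddNode (l m : MultiPartition r) (p : Pos r) : Prop :=
  (∀ s, s ≠ p.1 → m.part s = l.part s) ∧
  (∀ i, i ≠ p.2 → m.part p.1 i = l.part p.1 i) ∧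
  m.part p.1 p.2 = l.part p.1 p.2 + 1

/-- the empty multipartition -/
def IsEmptyMP (l : MultiPartition r) : Prop := ∀ s, l.part s = 0

/-- Kleshchev multipartitions with respect to `(e; v)`: defined recursively by
adding good nodes. -/
inductive Kleshchev (v : Fin r → ZMod e) : MultiPartition r → Prop
  | empty (l : MultiPartition r) : IsEmptyMP l → Kleshchev v l
  | step (l m : MultiPartition r) (p : Pos r) (x : ZMod e) :
      Kleshchev v l → AddNode l m p → Good v m p x → Kleshchev v m

/-- a semi-ladder node: a removable node with no lower addable node of the
same residue -/
def SemiLadder (v : Fin r → ZMod e) (l : MultiPartition r) (p : Pos r) : Prop :=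
  Removable l p ∧ ∀ q, Addable l q → resAdd v l q = resRem v l p → ¬ Below q p

/-- a ladder node: a semi-ladder node with no higher semi-ladder node of the
same residue -/
def LadderNode (v : Fin r → ZMod e) (l : MultiPartition r) (p : Pos r) : Prop :=
  SemiLadder v l p ∧
  ∀ q, SemiLadder v l q → resRem v l q = resRem v l p → ¬ Below p q

/-- `m` is obtained from `l` by removing all the nodes of the ladder
`x`-sequence of `l` (i.e. all semi-ladder `x`-nodes of `l`, which is required
to be nonempty). -/
def RemoveLadderSeq (v : Fin r → ZMod e) (l m : MultiPartition r) (x : ZMod e) : Prop :=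
  (∃ p, SemiLadder v l p ∧ resRem v l p = x) ∧
  ∀ s i, (SemiLadder v l (s, i) ∧ resRem v l (s, i) = x →
            m.part s i = l.part s i - 1) ∧
         (¬ (SemiLadder v l (s, i) ∧ resRem v l (s, i) = x) →
            m.part s i = l.part s i)

/-- strong ladder multipartitions: obtained from the empty multipartition by
successively adding whole ladder sequences -/
inductive StrongLadder (v : Fin r → ZMod e) : MultiPartition r → Prop
  | empty (l : MultiPartition r) : IsEmptyMP l → StrongLadder v l
  | step (l m : MultiPartition r) (x : ZMod e) :
      StrongLadder v l → RemoveLadderSeq v m l x → StrongLadder v m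

/-- ladder multipartitions: obtained from the empty multipartition by
successively adding single ladder nodes -/
inductive Ladder (v : Fin r → ZMod e) : MultiPartition r → Prop
  | empty (l : MultiPartition r) : IsEmptyMP l → Ladder v l
  | step (l m : MultiPartition r) (p : Pos r) :
      Ladder v l → AddNode l m p → LadderNode v m p → Ladder v m

/-- the dominance order on multipartitions -/
def Dominates (l m : MultiPartition r) : Prop :=
  ∀ s : Fin r, ∀ i : ℕ,
    ((∑ a ∈ Finset.univ.filter (fun a => a < s), (l.part a).sum fun _ v => v) +
      ∑ j ∈ Finset.range i, l.part s j) ≥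
    ((∑ a ∈ Finset.univ.filter (fun a => a < s), (m.part a).sum fun _ v => v) +
      ∑ j ∈ Finset.range i, m.part s j)

/-- the order `≺` of Definition 3.6 -/
def Prec (l m : MultiPartition r) : Prop :=
  ∃ s : Fin r, ∃ t : ℕ,
    (∀ j, s < j → l.part j = m.part j) ∧
    (∀ j, t < j → l.part s j = m.part s j) ∧
    l.part s t < m.part s t

/-- hook length at the node in row `i`, column `j` (0-based) of a partition `f` -/
noncomputable def hookLen (f : ℕ →₀ ℕ) (i j : ℕ) : ℕ :=
  (f i - j) + {k : ℕ | i < k ∧ j < f k}.ncard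

/-- an `e`-core: a partition having no hook of length `e`
(for `e = 0` every partition is a `0`-core) -/
def ECore (e : ℕ) (f : ℕ →₀ ℕ) : Prop :=
  ∀ i j, j < f i → hookLen f i j ≠ e

/-- `e`-restricted partitions (every partition is `0`-restricted) -/
def ERestricted (e : ℕ) (f : ℕ →₀ ℕ) : Prop :=
  ∀ i, e ≠ 0 → f i - f (i + 1) < e

end MultiPartition

open MultiPartition

namespace ECoreProof

open MultiPartition

/-- the beta number of row `k` -/
def beta (f : ℕ →₀ ℕ) (k : ℕ) : ℤ := (f k : ℤ) - k

variable {f : ℕ →₀ ℕ}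

lemma beta_add_le (hm : ∀ i, f (i + 1) ≤ f i) (k d : ℕ) :
    beta f (k + d) ≤ beta f k - d := by
  induction d with
  | zero => simp
  | succ d ih =>
    have h := hm (k + d)
    have he : k + (d + 1) = (k + d) + 1 := by omega
    rw [he]
    simp only [beta] at *
    push_cast at *
    omega

lemma beta_le_of_le (hm : ∀ i, f (i + 1) ≤ f i) {i k : ℕ} (h : i ≤ k) :
    beta f k ≤ beta f i - (k - i : ℕ) := by
  have := beta_add_le hm i (k - i)
  rwa [Nat.add_sub_cancel' h] at this

lemma beta_strictAnti (hm : ∀ i, f (i + 1) ≤ f i) : StrictAnti (beta f) := by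
  intro i k hik
  have := beta_le_of_le hm hik.le
  have : (1 : ℤ) ≤ (k - i : ℕ) := by
    have := Nat.sub_pos_of_lt hik; exact_mod_cast this
  omega

/-- from a gap in the beta set at distance `e`, produce a hook of length `e` -/
lemma exists_hook (hm : ∀ i, f (i + 1) ≤ f i) {e : ℕ} (he : 1 ≤ e) (i : ℕ)
    (hc : ∀ k, beta f k ≠ beta f i - e) :
    ∃ j, j < f i ∧ hookLen f i j = e := by
  set c : ℤ := beta f i - e with hcdef
  -- the beta numbers eventually drop below c
  have hex : ∃ k, beta f k ≤ c := by
    obtain ⟨N, hN⟩ : ∃ N : ℕ, beta f 0 - c ≤ (N : ℤ) :=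
      ⟨(beta f 0 - c).toNat, Int.self_le_toNat _⟩
    refine ⟨N, ?_⟩
    have h1 := beta_le_of_le hm (Nat.zero_le N)
    rw [Nat.sub_zero] at h1
    omega
  classical
  obtain ⟨t, ht, ht'⟩ : ∃ t, beta f t ≤ c ∧ ∀ k, k < t → c < beta f k :=
    ⟨Nat.find hex, Nat.find_spec hex, fun k hk => lt_of_not_ge (Nat.find_min hex hk)⟩
  have hbt : beta f t ≤ c - 1 := by
    have := hc t; omega
  have hit : i < t := by
    by_contra h
    push_neg at h
    have h1 := beta_le_of_le hm h
    have h2 : (0:ℤ) ≤ ((i - t : ℕ) : ℤ) := Int.natCast_nonneg _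
    have he' : (1:ℤ) ≤ (e : ℤ) := by exact_mod_cast he
    omega
  -- j as an integer is c + t - 1, which is nonnegative
  have hjnn : 0 ≤ c + t - 1 := by
    have : (f t : ℤ) - t ≤ c - 1 := hbt
    have : (0:ℤ) ≤ f t := Int.natCast_nonneg _
    omega
  obtain ⟨j, hj⟩ : ∃ j : ℕ, (j : ℤ) = c + t - 1 := ⟨(c + t - 1).toNat, Int.toNat_of_nonneg hjnn⟩
  -- the leg set
  have hset : {k : ℕ | i < k ∧ j < f k} = ↑(Finset.Ico (i + 1) t) := by
    ext k
    simp only [Set.mem_setOf_eq, Finset.coe_Ico, Set.mem_Ico]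
    constructor
    · rintro ⟨h1, h2⟩
      refine ⟨h1, ?_⟩
      by_contra h3
      push_neg at h3
      have h4 := beta_le_of_le hm h3
      have h5 : ((k - t : ℕ) : ℤ) = (k : ℤ) - t := by
        have := Nat.cast_sub h3 (R := ℤ); omega
      have : (f k : ℤ) ≤ c + t - 1 := by
        have hbt' : (f t : ℤ) - t ≤ c - 1 := hbt
        simp only [beta] at h4
        omega
      have : (j : ℤ) < f k := by exact_mod_cast h2
      omega
    · rintro ⟨h1, h2⟩
      refine ⟨h1, ?_⟩
      have h4 : beta f k ≤ beta f i := (beta_strictAnti hm).antitone (le_of_lt h1)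
      have h5 : k ≤ t - 1 := by omega
      have h6 := beta_le_of_le hm h5
      have h7 : c < beta f (t - 1) := ht' _ (by omega)
      have h8 : ((t - 1 - k : ℕ) : ℤ) = (t : ℤ) - 1 - k := by
        have := Nat.cast_sub h5 (R := ℤ)
        have : ((t - 1 : ℕ) : ℤ) = (t : ℤ) - 1 := by
          have := Nat.cast_sub (show 1 ≤ t by omega) (R := ℤ); push_cast at this; omega
        omega
      have : c + (t : ℤ) - k ≤ beta f k := by omega
      have : (j : ℤ) < f k := by simp only [beta] at this; omega
      exact_mod_cast this
  have hncard : {k : ℕ | i < k ∧ j < f k}.ncard = t - (i + 1) := by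
    rw [hset, Set.ncard_coe_finset, Nat.card_Ico]
  -- the leg is at most e - 1
  have hleg : t - (i + 1) ≤ e - 1 := by
    have hinj : ∀ k ∈ Finset.Ico (i + 1) t, beta f k ∈ Finset.Ioo c (beta f i) := by
      intro k hk
      simp only [Finset.mem_Ico] at hk
      simp only [Finset.mem_Ioo]
      exact ⟨ht' k hk.2, beta_strictAnti hm (by omega)⟩
    have hcard := Finset.card_le_card_of_injOn (beta f) hinj
      (fun k _ k' _ h => (beta_strictAnti hm).injective h)
    rw [Nat.card_Ico] at hcard
    have : (Finset.Ioo c (beta f i)).card = e - 1 := by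
      rw [Int.card_Ioo]
      have : beta f i - c - 1 = (e : ℤ) - 1 := by omega
      rw [this]
      have : ((e : ℤ) - 1).toNat = e - 1 := by omega
      omega
    omega
  have hjlt : j < f i := by
    have h1 : (j : ℤ) = c + t - 1 := hj
    have h2 : (t : ℤ) ≤ i + e := by
      have : ((t - (i+1) : ℕ) : ℤ) ≤ (e : ℤ) - 1 := by
        have he' : (1:ℤ) ≤ e := by exact_mod_cast he
        have := Nat.cast_le (α := ℤ) |>.mpr hleg
        have h3 : ((e - 1 : ℕ) : ℤ) = (e : ℤ) - 1 := by
          have := Nat.cast_sub he (R := ℤ); push_cast at this; omega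
        omega
      have h4 : ((t - (i+1) : ℕ) : ℤ) = (t : ℤ) - (i + 1) := by
        have := Nat.cast_sub (show i + 1 ≤ t by omega) (R := ℤ); push_cast at this; omega
      omega
    have : (j : ℤ) < f i := by simp only [hcdef, beta] at h1 ⊢; omega
    exact_mod_cast this
  refine ⟨j, hjlt, ?_⟩
  unfold MultiPartition.hookLen
  rw [hncard]
  have h1 : (j : ℤ) = (f i : ℤ) - i - e + t - 1 := by
    simp only [hcdef, beta] at hj; omega
  have h2 : i + 1 ≤ t := hit
  have h3 : j < f i := hjlt
  have h4 : t ≤ i + e := by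
    have : (t:ℤ) ≤ i + e := by omega
    exact_mod_cast this
  omega

lemma beta_sub_mem (hm : ∀ i, f (i + 1) ≤ f i) {e : ℕ} (he : 1 ≤ e)
    (hcore : ECore e f) (i : ℕ) : ∃ k, beta f k = beta f i - e := by
  by_contra h
  push_neg at h
  obtain ⟨j, hj, hh⟩ := exists_hook hm he i h
  exact hcore i j hj hh

lemma beta_sub_nsmul_mem (hm : ∀ i, f (i + 1) ≤ f i) {e : ℕ} (he : 1 ≤ e)
    (hcore : ECore e f) (n : ℕ) (i : ℕ) : ∃ k, beta f k = beta f i - n * e := by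
  induction n with
  | zero => exact ⟨i, by simp⟩
  | succ n ih =>
    obtain ⟨k, hk⟩ := ih
    obtain ⟨k', hk'⟩ := beta_sub_mem hm he hcore k
    exact ⟨k', by rw [hk', hk]; push_cast; ring⟩

end ECoreProof


/-- an `e`-core (viewed as a `1`-partition, with charge `v`) does not
have simultaneously a removable `x`-node and an addable `x`-node. -/
theorem ecore_not_removable_and_addable {e : ℕ} (he : 2 ≤ e)
    (v : Fin 1 → ZMod e) (l : MultiPartition 1)
    (hcore : ECore e (l.part 0)) (x : ZMod e) :
    ¬ ((∃ i : ℕ, Removable l (0, i) ∧ resRem v l (0, i) = x) ∧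
       (∃ i : ℕ, Addable l (0, i) ∧ resAdd v l (0, i) = x)) := by
  classical
  rintro ⟨⟨a, hrem, hra⟩, ⟨b, hadd, hab⟩⟩
  set f := l.part 0 with hf
  have hm : ∀ i, f (i + 1) ≤ f i := fun i => l.mono 0 i
  have hsa := ECoreProof.beta_strictAnti (f := f) hm
  -- removable data
  have hrem' : f (a + 1) < f a := hrem
  have hfa1 : 1 ≤ f a := by omega
  -- β a - 1 is not a beta number
  have hnrem : ∀ k, ECoreProof.beta f k ≠ ECoreProof.beta f a - 1 := by
    intro k hk
    rcases le_or_gt k a with h | h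
    · have := hsa.antitone h
      omega
    · have h1 : a + 1 ≤ k := h
      have h2 := hsa.antitone h1
      have h3 : ECoreProof.beta f (a + 1) ≤ ECoreProof.beta f a - 2 := by
        simp only [ECoreProof.beta]
        push_cast
        omega
      omega
  -- β b + 1 is not a beta number
  have hnadd : ∀ k, ECoreProof.beta f k ≠ ECoreProof.beta f b + 1 := by
    intro k hk
    rcases hadd with hb0 | hblt
    · -- b = 0 : everything is ≤ β 0
      simp only at hb0
      subst hb0
      rcases Nat.eq_zero_or_pos k with rfl | hk0
      · omega
      · have := hsa (show 0 < k from hk0)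
        omega
    · -- f b < f (b-1)
      have hb1 : 1 ≤ b := by
        by_contra h
        interval_cases b <;> simp_all
      have h3 : ECoreProof.beta f b + 2 ≤ ECoreProof.beta f (b - 1) := by
        simp only [ECoreProof.beta]
        have : ((b - 1 : ℕ) : ℤ) = (b : ℤ) - 1 := by
          have := Nat.cast_sub hb1 (R := ℤ); push_cast at this; omega
        have hblt' : f b + 1 ≤ f (b - 1) := hblt
        push_cast
        omega
      rcases le_or_gt k (b - 1) with h | h
      · have := hsa.antitone h
        omega
      · have h1 : b ≤ k := by omega
        have := hsa.antitone h1
        omega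
  -- residues agree, so β a - 1 ≡ β b (mod e)
  haveI : NeZero e := ⟨by omega⟩
  have hres : ((ECoreProof.beta f a - 1 - ECoreProof.beta f b : ℤ) : ZMod e) = 0 := by
    have h1 : resRem v l (0, a) = resAdd v l (0, b) := by rw [hra, hab]
    simp only [MultiPartition.resRem, MultiPartition.resAdd, MultiPartition.resNode] at h1
    have h2 : ((f a - 1 : ℕ) : ZMod e) = (f a : ZMod e) - 1 := by
      have := Nat.cast_sub hfa1 (R := ZMod e)
      simpa using this
    simp only [ECoreProof.beta]
    push_cast
    rw [h2] at h1
    have h1' : (f a : ZMod e) - 1 - a = (f b : ZMod e) - b := by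
      have := h1
      -- cancel v 0
      have hv : ((f a - 1 : ℕ) : ZMod e) - (a : ZMod e) = (f b : ZMod e) - (b : ZMod e) := by
        have := h1
        rw [h2]
        linear_combination this
      rw [h2] at hv
      linear_combination hv
    linear_combination (h1' : _)
  have hdvd : (e : ℤ) ∣ (ECoreProof.beta f a - 1 - ECoreProof.beta f b) :=
    (ZMod.intCast_zmod_eq_zero_iff_dvd _ e).mp hres
  obtain ⟨m, hmm⟩ := hdvd
  have he1 : 1 ≤ e := by omega
  rcases le_or_gt m 0 with hm0 | hm0
  · -- β b = β a - 1 + (-m) e, so β b would force β a - 1 into the beta set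
    obtain ⟨n, hn⟩ : ∃ n : ℕ, (n : ℤ) = -m := ⟨(-m).toNat, Int.toNat_of_nonneg (by omega)⟩
    obtain ⟨k, hk⟩ := ECoreProof.beta_sub_nsmul_mem hm he1 hcore n b
    apply hnrem k
    rw [hk]
    push_cast
    rw [hn]
    linear_combination -hmm
  · -- β b + 1 = β a - m e with m ≥ 1
    obtain ⟨n, hn⟩ : ∃ n : ℕ, (n : ℤ) = m := ⟨m.toNat, Int.toNat_of_nonneg (by omega)⟩
    obtain ⟨k, hk⟩ := ECoreProof.beta_sub_nsmul_mem hm he1 hcore n a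
    apply hnadd k
    rw [hk]
    push_cast
    rw [hn]
    linear_combination hmm
end

section
/- Let e ≥ 2, v ∈ ℤ/eℤ, and let λ be an e-core partition (residue of node (i,j) is j - i + v mod e). Fix x ∈ ℤ/eℤ and let μ be the partition obtained from λ by removing all removable x-nodes of λ. Then μ is again an e-core. -/
open Finset

open MultiPartition

/-- beyond some point, a finitely supported function vanishes -/
private lemma aux_exists_zero (f : ℕ →₀ ℕ) : ∃ N : ℕ, ∀ k, N ≤ k → f k = 0 := by
  refine ⟨f.support.sup id + 1, fun k hk => ?_⟩
  by_contra h
  have h1 : k ∈ f.support := Finsupp.mem_support_iff.2 h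
  have h2 := Finset.le_sup (f := id) h1
  simp only [id] at h2
  omega

/-- evaluate the hook length, given a cut point `n` for the column condition -/
private lemma aux_hook_eval (f : ℕ →₀ ℕ) {i j n : ℕ} (hn : ∀ k, j < f k ↔ k < n) :
    hookLen f i j = (f i - j) + (n - i - 1) := by
  have hset : {k : ℕ | i < k ∧ j < f k} = ↑(Finset.Ioo i n) := by
    ext k
    simp [Set.mem_setOf_eq, hn k]
  unfold hookLen
  rw [hset, Set.ncard_coe_finset, Nat.card_Ioo]

/-- a hook of length `h` at `(i,j)` means `β i - h` is not a beta number -/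
private lemma aux_hook_to_beta {f : ℕ →₀ ℕ} (hf : ∀ i, f (i + 1) ≤ f i)
    {i j : ℕ} (hj : j < f i) (k : ℕ) :
    (f k : ℤ) - k ≠ (f i : ℤ) - i - hookLen f i j := by
  have hanti : Antitone f := antitone_nat_of_succ_le hf
  obtain ⟨N, hN⟩ := aux_exists_zero f
  have hne : {k : ℕ | f k ≤ j}.Nonempty := ⟨N, by simp [hN N le_rfl]⟩
  set n := sInf {k : ℕ | f k ≤ j} with hndef
  have hmem : f n ≤ j := Nat.sInf_mem hne
  have hiff : ∀ k, j < f k ↔ k < n := by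
    intro k
    constructor
    · intro hk
      by_contra hnk
      push_neg at hnk
      have := hanti hnk
      omega
    · intro hk
      have h1 : k ∉ {k : ℕ | f k ≤ j} := Nat.notMem_of_lt_sInf hk
      simp only [Set.mem_setOf_eq, not_le] at h1
      exact h1
  have hin : i < n := (hiff i).1 hj
  rw [aux_hook_eval f hiff]
  rcases lt_or_ge k n with hk | hk
  · have h1 : j < f k := (hiff k).2 hk
    push_cast
    omega
  · have h1 : f k ≤ j := le_trans (hanti hk) hmem
    push_cast
    omega

/-- a missing beta number below `β i` produces a hook in row `i` -/
private lemma aux_beta_to_hook {f : ℕ →₀ ℕ} (hf : ∀ i, f (i + 1) ≤ f i) {i : ℕ} {y : ℤ}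
    (hy : ∀ k, (f k : ℤ) - k ≠ y) (hlt : y < (f i : ℤ) - i) :
    ∃ j : ℕ, j < f i ∧ (hookLen f i j : ℤ) = (f i : ℤ) - i - y := by
  have hanti : Antitone f := antitone_nat_of_succ_le hf
  obtain ⟨N, hN⟩ := aux_exists_zero f
  have hne : {k : ℕ | (f k : ℤ) - k < y}.Nonempty := by
    refine ⟨N + (-y).toNat + 1, ?_⟩
    have h0 : f (N + (-y).toNat + 1) = 0 := hN _ (by omega)
    simp only [Set.mem_setOf_eq, h0]
    have := Int.self_le_toNat (-y)
    push_cast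
    omega
  set n := sInf {k : ℕ | (f k : ℤ) - k < y} with hndef
  have hmem : (f n : ℤ) - n < y := Nat.sInf_mem hne
  have hiff' : ∀ k, y < (f k : ℤ) - k ↔ k < n := by
    intro k
    constructor
    · intro hk
      by_contra hnk
      push_neg at hnk
      have h1 : f k ≤ f n := hanti hnk
      omega
    · intro hk
      have h1 : k ∉ {k : ℕ | (f k : ℤ) - k < y} := Nat.notMem_of_lt_sInf hk
      simp only [Set.mem_setOf_eq, not_lt] at h1
      have h2 := hy k
      omega
  have hn_i : i < n := (hiff' i).1 hlt
  have hjz : 0 ≤ y + n - 1 := by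
    rcases le_or_gt y 0 with hy0 | hy0
    · have ht : ((-y).toNat) < n := by
        apply (hiff' _).1
        have h1 := hy ((-y).toNat)
        have h2 : (((-y).toNat : ℤ)) = -y := Int.toNat_of_nonneg (by omega)
        have h3 : (0 : ℤ) ≤ (f ((-y).toNat) : ℤ) := by positivity
        omega
      omega
    · omega
  set j := (y + n - 1).toNat with hjdef
  have hj_cast : (j : ℤ) = y + n - 1 := Int.toNat_of_nonneg hjz
  have hiff : ∀ k, j < f k ↔ k < n := by
    intro k
    constructor
    · intro hk
      by_contra hnk
      push_neg at hnk
      have h1 : f k ≤ f n := hanti hnk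
      omega
    · intro hk
      have h1 : f (n - 1) ≤ f k := hanti (by omega)
      have h2 : y < (f (n - 1) : ℤ) - (n - 1 : ℕ) := (hiff' (n - 1)).2 (by omega)
      omega
  have hjfi : j < f i := (hiff i).2 hn_i
  refine ⟨j, hjfi, ?_⟩
  rw [aux_hook_eval f hiff]
  push_cast
  omega

/-- removing all removable `x`-nodes from an `e`-core yields an
`e`-core. -/
theorem ecore_remove_all_x_nodes {e : ℕ} (he : 2 ≤ e)
    (v : Fin 1 → ZMod e) (l m : MultiPartition 1)
    (hcore : ECore e (l.part 0)) (x : ZMod e)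
    (hrem : ∀ i : ℕ,
      (Removable l (0, i) ∧ resRem v l (0, i) = x →
        m.part 0 i = l.part 0 i - 1) ∧
      (¬ (Removable l (0, i) ∧ resRem v l (0, i) = x) →
        m.part 0 i = l.part 0 i)) :
    ECore e (m.part 0) := by
  haveI : Fact (1 < e) := ⟨he⟩
  set lp := l.part 0 with hlp
  set mp := m.part 0 with hmp
  have hl : ∀ i, lp (i + 1) ≤ lp i := l.mono 0
  have hm : ∀ i, mp (i + 1) ≤ mp i := m.mono 0
  have hantil : Antitone lp := antitone_nat_of_succ_le hl
  set c : ZMod e := x - v 0 + 1 with hc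
  -- Step 1: the beta set of `lp` is closed under subtracting `e`
  have hB : ∀ k : ℕ, ∃ k' : ℕ, (lp k' : ℤ) - k' = (lp k : ℤ) - k - e := by
    intro k
    by_contra h
    push_neg at h
    have hlt : (lp k : ℤ) - k - e < (lp k : ℤ) - k := by omega
    obtain ⟨j, hj, hhook⟩ := aux_beta_to_hook hl h hlt
    have : hookLen lp k j = e := by omega
    exact hcore k j hj this
  -- removability characterization
  have hrm : ∀ k : ℕ,
      (lp (k + 1) < lp k ↔ ∀ k' : ℕ, (lp k' : ℤ) - k' ≠ (lp k : ℤ) - k - 1) := by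
    intro k
    constructor
    · intro hlt k' heq
      rcases le_or_gt k' k with h | h
      · have h2 : lp k ≤ lp k' := hantil h
        omega
      · have h2 : lp k' ≤ lp (k + 1) := hantil h
        omega
    · intro hne
      by_contra hge
      push_neg at hge
      have h1 : lp (k + 1) = lp k := le_antisymm (hl k) hge
      exact hne (k + 1) (by push_cast [h1]; ring)
  -- residue characterization
  have hres : ∀ k : ℕ, 1 ≤ lp k →
      (resRem v l (0, k) = x ↔ (((lp k : ℤ) - (k : ℤ) : ℤ) : ZMod e) = c) := by
    intro k hk
    have h1 : resRem v l (0, k) = ((lp k : ZMod e) - 1) - (k : ZMod e) + v 0 := by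
      show resNode v 0 k (lp k - 1) = _
      unfold resNode
      rw [Nat.cast_sub hk]
      push_cast
      ring
    rw [h1, hc]
    push_cast
    constructor <;> intro h <;> linear_combination h
  -- characterization of the removal predicate
  have hPchar : ∀ k : ℕ,
      ((Removable l (0, k) ∧ resRem v l (0, k) = x) ↔
        ((∀ k' : ℕ, (lp k' : ℤ) - k' ≠ (lp k : ℤ) - k - 1) ∧
          (((lp k : ℤ) - (k : ℤ) : ℤ) : ZMod e) = c)) := by
    intro k
    constructor
    · rintro ⟨h1, h2⟩
      have hr : lp (k + 1) < lp k := h1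
      exact ⟨(hrm k).1 hr, (hres k (by omega)).1 h2⟩
    · rintro ⟨h1, h2⟩
      have hr : lp (k + 1) < lp k := (hrm k).2 h1
      exact ⟨hr, (hres k (by omega)).2 h2⟩
  -- beta numbers of `mp`
  have hmu : ∀ k : ℕ,
      ((Removable l (0, k) ∧ resRem v l (0, k) = x) →
          (mp k : ℤ) - k = (lp k : ℤ) - k - 1) ∧
      (¬ (Removable l (0, k) ∧ resRem v l (0, k) = x) → (mp k : ℤ) = (lp k : ℤ)) := by
    intro k
    obtain ⟨h1, h2⟩ := hrem k
    constructor
    · intro hp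
      have h3 := h1 hp
      have hk1 : lp (k + 1) < lp k := hp.1
      omega
    · intro hnp
      rw [h2 hnp]
  -- casts of multiples of e vanish
  have hecast : ∀ z : ℤ, ((z - e : ℤ) : ZMod e) = ((z : ℤ) : ZMod e) := by
    intro z
    push_cast [ZMod.natCast_self]
    ring
  have h1ne : (1 : ZMod e) ≠ 0 := one_ne_zero
  -- main argument
  intro i j hj heq
  have hnB := fun k => aux_hook_to_beta hm hj k
  rw [heq] at hnB
  set b : ℤ := (lp i : ℤ) - i with hb
  by_cases hPi : Removable l (0, i) ∧ resRem v l (0, i) = x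
  · have hbm : (mp i : ℤ) - i = b - 1 := (hmu i).1 hPi
    have hcb : ((b : ℤ) : ZMod e) = c := ((hPchar i).1 hPi).2
    by_cases hA : ∃ k2 : ℕ, (lp k2 : ℤ) - k2 = b - 1 - e
    · obtain ⟨k2, hk2⟩ := hA
      have hnp : ¬ (Removable l (0, k2) ∧ resRem v l (0, k2) = x) := by
        intro hp
        have h2 : (((lp k2 : ℤ) - (k2 : ℤ) : ℤ) : ZMod e) = c := ((hPchar k2).1 hp).2
        rw [hk2] at h2
        have h3 : ((b - 1 - e : ℤ) : ZMod e) = ((b : ℤ) : ZMod e) - 1 := by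
          push_cast [ZMod.natCast_self]
          ring
        rw [h3, hcb] at h2
        exact h1ne (sub_eq_self.mp h2)
      have h4 : (mp k2 : ℤ) = (lp k2 : ℤ) := (hmu k2).2 hnp
      exact hnB k2 (by omega)
    · push_neg at hA
      obtain ⟨k', hk'⟩ := hB i
      have hp' : Removable l (0, k') ∧ resRem v l (0, k') = x := by
        apply (hPchar k').2
        constructor
        · intro k'' heq'
          exact hA k'' (by omega)
        · rw [hk', hecast]
          exact hcb
      have h5 : (mp k' : ℤ) - k' = (lp k' : ℤ) - k' - 1 := (hmu k').1 hp'
      exact hnB k' (by omega)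
  · have hbm : (mp i : ℤ) - i = b := by
      rw [(hmu i).2 hPi]
    obtain ⟨k', hk'⟩ := hB i
    have hnp : ¬ (Removable l (0, k') ∧ resRem v l (0, k') = x) := by
      intro hp
      obtain ⟨hno, hres'⟩ := (hPchar k').1 hp
      rw [hk', hecast] at hres'
      have hk3 : ∃ k3 : ℕ, (lp k3 : ℤ) - k3 = b - 1 := by
        by_contra hno3
        push_neg at hno3
        exact hPi ((hPchar i).2 ⟨hno3, hres'⟩)
      obtain ⟨k3, hk3⟩ := hk3
      obtain ⟨k4, hk4⟩ := hB k3
      exact hno k4 (by omega)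
    have h2 : (mp k' : ℤ) = (lp k' : ℤ) := (hmu k').2 hnp
    exact hnB k' (by omega)
end

section
/- Let e = 0 or e ≥ 2, r ≥ 1, and Q = (v₁,...,v_r) ∈ (ℤ/eℤ)ʳ. If λ is a nonempty Kleshchev r-partition of n with respect to (e;Q), then λ has at least one ladder node. (Equivalently: the lowest removable node α of λ is a semi-ladder node, i.e., λ has no addable node of residue res(α) below α.) -/
open Finset

open MultiPartition

namespace MultiPartition

variable {r e : ℕ}

lemma below_iff' (p q : Pos r) :
    Below p q ↔ ((q.1 : ℕ) < (p.1 : ℕ) ∨ ((p.1 : ℕ) = (q.1 : ℕ) ∧ q.2 < p.2)) := by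
  unfold Below
  rw [Fin.lt_def, Fin.ext_iff]

lemma below_toLex (p q : Pos r) : Below p q ↔ toLex q < toLex p := by
  rw [Prod.Lex.lt_iff, below_iff', Fin.lt_def, Fin.ext_iff]
  tauto

lemma addNode_eq {l m : MultiPartition r} {p : Pos r} (h : AddNode l m p)
    {s : Fin r} {i : ℕ} (hne : (s, i) ≠ p) : m.part s i = l.part s i := by
  by_cases hs : s = p.1
  · subst hs
    have hi : i ≠ p.2 := by
      intro hi; exact hne (by rw [hi])
    exact h.2.1 i hi
  · rw [h.1 s hs]

/-- Main induction: a removable node with no removable node below it is a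
semi-ladder node, for Kleshchev multipartitions. -/
lemma lowest_removable_semiLadder (v : Fin r → ZMod e) (l : MultiPartition r)
    (hK : Kleshchev v l) :
    ∀ α : Pos r, Removable l α → (∀ β, Removable l β → ¬ Below β α) →
      SemiLadder v l α := by
  induction hK with
  | empty l hl =>
    intro α hα _
    exfalso
    have := hα
    simp only [Removable, hl α.1] at this
    simp at this
  | step l m p x hKl hAdd hGood ih =>
    intro α hα hmin
    refine ⟨hα, ?_⟩
    intro q hq hres hbelow
    by_cases hpα : p = α
    · -- the added node is the lowest removable node: use the Good condition
      subst hpα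
      obtain ⟨⟨hrem, hx, hnorm⟩, -⟩ := hGood
      have hcount := hnorm q hq (hres.trans hx) hbelow
      have hzero :
          {q' : Pos r | Removable m q' ∧ resRem v m q' = x ∧ Below q' p ∧ Below q q'}.ncard
            = 0 := by
        have : {q' : Pos r | Removable m q' ∧ resRem v m q' = x ∧ Below q' p ∧ Below q q'}
            = (∅ : Set (Pos r)) := by
          ext q'
          simp only [Set.mem_setOf_eq, Set.mem_empty_iff_false, iff_false]
          rintro ⟨h1, -, h3, -⟩
          exact hmin q' h1 h3
        rw [this, Set.ncard_empty]
      omega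
    · -- the added node is strictly above α: transfer everything to l
      have hpRem : Removable m p := hGood.1.1
      have hαp : Below α p := by
        rcases lt_trichotomy (toLex p) (toLex α) with h | h | h
        · exact (below_toLex α p).mpr h
        · have hpe : p = α := by simpa using congrArg ofLex h
          exact absurd hpe hpα
        · exact absurd ((below_toLex p α).mpr h) (hmin p hpRem)
      rw [below_iff'] at hαp hbelow
      -- positions at or below α, or just below relevant rows, differ from p
      have hαne : α ≠ p := fun h => hpα h.symm
      have hαne' : (α.1, α.2 + 1) ≠ p := by
        intro h
        have h1 : α.1 = p.1 := by rw [← h]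
        have h2 : α.2 + 1 = p.2 := by rw [← h]
        rw [← h1, ← h2] at hαp
        omega
      have hqne : (q.1, q.2) ≠ p := by
        intro h
        have h1 : q.1 = p.1 := by rw [← h]
        have h2 : q.2 = p.2 := by rw [← h]
        rw [← h1, ← h2] at hαp
        omega
      have hqne' : (q.1, q.2 - 1) ≠ p := by
        intro h
        have h1 : q.1 = p.1 := by rw [← h]
        have h2 : q.2 - 1 = p.2 := by rw [← h]
        rw [← h1, ← h2] at hαp
        omega
      -- α is removable in l
      have hαl : Removable l α := by
        have h1 := addNode_eq hAdd (s := α.1) (i := α.2)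
          (by simpa using hαne)
        have h2 := addNode_eq hAdd (s := α.1) (i := α.2 + 1) hαne'
        unfold Removable at hα ⊢
        rw [← h1, ← h2]; exact hα
      -- nothing removable in l below α
      have hminl : ∀ β, Removable l β → ¬ Below β α := by
        intro β hβ hβα
        have hβα' := (below_iff' β α).mp hβα
        have hβne : (β.1, β.2) ≠ p := by
          intro h
          have h1 : β.1 = p.1 := by rw [← h]
          have h2 : β.2 = p.2 := by rw [← h]
          rw [← h1, ← h2] at hαp
          omega
        have hβne' : (β.1, β.2 + 1) ≠ p := by
          intro h
          have h1 : β.1 = p.1 := by rw [← h]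
          have h2 : β.2 + 1 = p.2 := by rw [← h]
          rw [← h1, ← h2] at hαp
          omega
        have hβm : Removable m β := by
          have h1 := addNode_eq hAdd hβne
          have h2 := addNode_eq hAdd hβne'
          unfold Removable at hβ ⊢
          rw [h1, h2]; exact hβ
        exact hmin β hβm hβα
      -- q is addable in l with the same residue
      have hql : Addable l q := by
        rcases hq with h0 | hlt
        · exact Or.inl h0
        · right
          have h1 := addNode_eq hAdd hqne
          have h2 := addNode_eq hAdd hqne'
          rw [← h1, ← h2]; exact hlt
      have hresl : resAdd v l q = resRem v l α := by
        unfold resAdd resRem at hres ⊢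
        rw [addNode_eq hAdd hqne, addNode_eq hAdd (by simpa using hαne)] at hres
        exact hres
      exact (ih α hαl hminl).2 q hql hresl ((below_iff' q α).mpr hbelow)

/-- A nonempty multipartition has finitely many removable nodes. -/
lemma removable_finite (l : MultiPartition r) :
    {p : Pos r | Removable l p}.Finite := by
  have hfin : ((Set.univ : Set (Fin r)) ×ˢ ⋃ s : Fin r, ((l.part s).support : Set ℕ)).Finite :=
    Set.finite_univ.prod (Set.finite_iUnion fun s => (l.part s).support.finite_toSet)
  refine hfin.subset ?_
  rintro ⟨s, i⟩ hp
  have hp' : l.part s (i + 1) < l.part s i := hp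
  refine ⟨Set.mem_univ _, Set.mem_iUnion.mpr ⟨s, ?_⟩⟩
  simp only [Finset.mem_coe, Finsupp.mem_support_iff]
  intro h
  rw [h] at hp'
  exact absurd hp' (Nat.not_lt_zero _)

lemma exists_removable (l : MultiPartition r) (hne : ¬ IsEmptyMP l) :
    ∃ p : Pos r, Removable l p := by
  have : ∃ s, l.part s ≠ 0 := by
    by_contra h; push_neg at h; exact hne h
  obtain ⟨s, hs⟩ := this
  have hsup : (l.part s).support.Nonempty := Finsupp.support_nonempty_iff.mpr hs
  set i := (l.part s).support.max' hsup with hi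
  refine ⟨(s, i), ?_⟩
  have h1 : l.part s i ≠ 0 := Finsupp.mem_support_iff.mp ((l.part s).support.max'_mem hsup)
  have h2 : l.part s (i + 1) = 0 := by
    by_contra h
    have := (l.part s).support.le_max' (i + 1) (Finsupp.mem_support_iff.mpr h)
    omega
  unfold Removable
  simp only
  omega

end MultiPartition

/-- a nonempty Kleshchev multipartition has at least one ladder node. -/
theorem kleshchev_has_ladder_node {r e : ℕ} (he : e = 0 ∨ 2 ≤ e)
    (v : Fin r → ZMod e) (l : MultiPartition r)
    (hK : Kleshchev v l) (hne : ¬ IsEmptyMP l) :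
    ∃ p : Pos r, LadderNode v l p := by
  obtain ⟨p0, hp0⟩ := exists_removable l hne
  -- pick the lowest removable node
  obtain ⟨α, hα, hαmax⟩ := Set.Finite.exists_maximalFor
    (fun p : Pos r => toLex p) {p : Pos r | Removable l p} (removable_finite l) ⟨p0, hp0⟩
  have hαmin : ∀ β, Removable l β → ¬ Below β α := by
    intro β hβ hβα
    have hlt := (below_toLex β α).mp hβα
    have := hαmax (j := β) hβ (le_of_lt hlt)
    exact absurd this (not_le_of_gt hlt)
  have hSL : SemiLadder v l α := lowest_removable_semiLadder v l hK α hα hαmin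
  -- pick the highest semi-ladder node of the same residue
  set y := resRem v l α with hy
  have hTfin : {p : Pos r | SemiLadder v l p ∧ resRem v l p = y}.Finite :=
    (removable_finite l).subset (fun p hp => hp.1.1)
  obtain ⟨q, hq, hqmin⟩ := Set.Finite.exists_minimalFor
    (fun p : Pos r => toLex p) _ hTfin ⟨α, hSL, rfl⟩
  refine ⟨q, hq.1, ?_⟩
  intro q' hq' hres hbq
  have hq'T : q' ∈ {p : Pos r | SemiLadder v l p ∧ resRem v l p = y} :=
    ⟨hq', by rw [hres, hq.2]⟩
  have hlt := (below_toLex q q').mp hbq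
  have := hqmin (j := q') hq'T (le_of_lt hlt)
  exact absurd this (not_le_of_gt hlt)
end

section
/- Let e = 0 or e ≥ 2 and let λ be a Kleshchev r-partition of n with respect to (e; v₁,...,v_r). Then each component λ⁽ⁱ⁾ (1 ≤ i ≤ r) is an e-restricted partition, i.e., λⱼ⁽ⁱ⁾ - λⱼ₊₁⁽ⁱ⁾ < e for all j when e ≥ 2 (no condition when e = 0). -/
open Finset

open MultiPartition

/-- each component of a Kleshchev multipartition is `e`-restricted. -/
theorem kleshchev_components_erestricted {r e : ℕ} (he : e = 0 ∨ 2 ≤ e)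
    (v : Fin r → ZMod e) (l : MultiPartition r)
    (hK : Kleshchev v l) :
    ∀ s : Fin r, ERestricted e (l.part s) := by
  induction hK with
  | empty l hl =>
    intro s i he0
    simp only [hl s, Finsupp.coe_zero, Pi.zero_apply]
    omega
  | step l m p x hKl hAdd hGood ih =>
    obtain ⟨s0, i0⟩ := p
    obtain ⟨h1, h2, h3⟩ := hAdd
    intro s i he0
    have he2 : 2 ≤ e := he.resolve_left he0
    by_cases hs : s = s0
    · subst hs
      by_cases hi : i = i0
      · subst hi
        have hM1 : m.part s (i + 1) = l.part s (i + 1) := h2 (i + 1) (by omega)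
        have hIH := ih s i he0
        by_contra hcon
        have hmono := m.mono s i
        have heq : m.part s i = m.part s (i + 1) + e := by
          simp only [h3, hM1] at *; omega
        obtain ⟨⟨hRem, hRes, hN⟩, -⟩ := hGood
        set a := m.part s (i + 1) with ha
        -- the addable node at row i+1 has residue x
        have hadd : Addable m (s, i + 1) := by
          right
          simp only [Nat.add_sub_cancel]
          omega
        have hres : resAdd v m (s, i + 1) = x := by
          rw [← hRes]
          simp only [resAdd, resRem, resNode, heq]
          have h4 : a + e - 1 = a + (e - 1) := by omega
          have he1 : ((e - 1 : ℕ) : ZMod e) = -1 := by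
            have h5 : ((e - 1 : ℕ) : ZMod e) + 1 = 0 := by
              have h6 : (((e - 1) + 1 : ℕ) : ZMod e) = 0 := by
                rw [show e - 1 + 1 = e by omega, ZMod.natCast_self]
              push_cast at h6
              exact h6
            exact eq_neg_of_add_eq_zero_left h5
          rw [h4]
          push_cast [he1]
          ring
        have hbel : Below (s, i + 1) ((s, i) : Pos r) := Or.inr ⟨rfl, Nat.lt_succ_self i⟩
        have key := hN (s, i + 1) hadd hres hbel
        have hRempty : {q' : Pos r | Removable m q' ∧ resRem v m q' = x ∧
            Below q' ((s, i) : Pos r) ∧ Below ((s, i + 1) : Pos r) q'} = ∅ := by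
          ext q'
          simp only [Set.mem_setOf_eq, Set.mem_empty_iff_false, iff_false, not_and]
          rintro - - hb1 hb2
          simp only [Below] at hb1 hb2
          rcases hb1 with h | ⟨h, h'⟩ <;> rcases hb2 with g | ⟨g, g'⟩
          · exact absurd g (lt_asymm h)
          · exact absurd g h.ne
          · exact absurd h g.ne
          · omega
        rw [hRempty, Set.ncard_empty] at key
        omega
      · by_cases hi1 : i + 1 = i0
        · have hM0 : m.part s i = l.part s i := h2 i hi
          have hM1 : m.part s (i + 1) = l.part s (i + 1) + 1 := by rw [hi1] at *; exact h3
          have := ih s i he0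
          omega
        · rw [h2 i hi, h2 (i + 1) hi1]
          exact ih s i he0
    · rw [h1 s hs]
      exact ih s i he0
end

section
/- When r = 1, the set of Kleshchev 1-partitions of n with respect to (e; v) equals the set of e-restricted partitions of n, for any e = 0 or e ≥ 2 and any v ∈ ℤ/eℤ. -/
open Finset

open MultiPartition

namespace KleshchevAux

open MultiPartition

lemma fin1_eq (s : Fin 1) : s = 0 := Subsingleton.elim _ _

lemma below_iff {p q : Pos 1} : Below p q ↔ q.2 < p.2 := by
  unfold Below
  constructor
  · rintro (h | ⟨-, h⟩)
    · rw [Subsingleton.elim q.1 p.1] at h; exact absurd h (lt_irrefl _)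
    · exact h
  · intro h; exact Or.inr ⟨Subsingleton.elim _ _, h⟩

lemma finite_pos (P : Pos 1 → Prop) (g : ℕ) (h : ∀ q', P q' → q'.2 < g) :
    {q' : Pos 1 | P q'}.Finite := by
  apply Set.Finite.subset ((Set.finite_Iio g).image (fun i => ((0 : Fin 1), i)))
  rintro ⟨a, b⟩ hb
  refine ⟨b, h _ hb, ?_⟩
  rw [fin1_eq a]

lemma myOneNeZero {e : ℕ} (he : e = 0 ∨ 2 ≤ e) : (1 : ZMod e) ≠ 0 := by
  intro h
  rw [show (1 : ZMod e) = ((1 : ℕ) : ZMod e) by push_cast; ring,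
    ZMod.natCast_eq_zero_iff] at h
  rw [Nat.dvd_one] at h
  omega

lemma myCastNeZero {e : ℕ} {a : ℕ} (h1 : 0 < a) (h2 : e ≠ 0 → a < e) :
    (a : ZMod e) ≠ 0 := by
  intro h
  rw [ZMod.natCast_eq_zero_iff] at h
  rcases Nat.eq_zero_or_pos e with rfl | hpos
  · rw [Nat.zero_dvd] at h; omega
  · have := Nat.le_of_dvd h1 h
    have := h2 (by omega)
    omega

/-- Forward direction: Kleshchev implies e-restricted. -/
lemma kleshchev_to_erestricted {e : ℕ} (he : e = 0 ∨ 2 ≤ e) (v : Fin 1 → ZMod e)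
    {l : MultiPartition 1} (h : Kleshchev v l) : ERestricted e (l.part 0) := by
  induction h with
  | empty l hl =>
    intro i hez
    rw [hl 0]
    simpa using Nat.pos_of_ne_zero hez
  | step l m p x hk hadd hgood ih =>
    obtain ⟨p1, t⟩ := p
    have hp1 : p1 = 0 := fin1_eq p1
    subst hp1
    obtain ⟨-, h2a, h3a⟩ := hadd
    have h2 : ∀ j, j ≠ t → m.part 0 j = l.part 0 j := h2a
    have h3 : m.part 0 t = l.part 0 t + 1 := h3a
    intro i hez
    have he2 : 2 ≤ e := by rcases he with rfl | he' <;> omega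
    rcases eq_or_ne i t with rfl | h1
    · -- the interesting case
      by_contra hcon
      have hmle : m.part 0 (i + 1) ≤ m.part 0 i := m.mono 0 i
      have hmi : m.part 0 i = l.part 0 i + 1 := h3
      have hmi1 : m.part 0 (i + 1) = l.part 0 (i + 1) := h2 (i + 1) (by omega)
      have hli := ih i hez
      have hmt : m.part 0 i = m.part 0 (i + 1) + e := by omega
      have hnorm := hgood.1
      have hq : Addable m ((0 : Fin 1), i + 1) := by
        refine Or.inr ?_
        show m.part 0 (i + 1) < m.part 0 (i + 1 - 1)
        simp only [Nat.add_sub_cancel]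
        omega
      have hres : resAdd v m ((0 : Fin 1), i + 1) = x := by
        rw [← hnorm.2.1]
        show ((m.part 0 (i+1) : ZMod e)) - ((i+1 : ℕ) : ZMod e) + v 0
            = ((m.part 0 i - 1 : ℕ) : ZMod e) - (i : ZMod e) + v 0
        rw [hmt, show m.part 0 (i+1) + e - 1 = m.part 0 (i+1) + (e - 1) by omega]
        push_cast [Nat.cast_sub (show 1 ≤ e by omega), ZMod.natCast_self]
        ring
      have hbel : Below ((0 : Fin 1), i + 1) ((0 : Fin 1), i) := below_iff.mpr (by omega)
      have hcount := hnorm.2.2 ((0 : Fin 1), i + 1) hq hres hbel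
      have hA : {q' : Pos 1 | Removable m q' ∧ resRem v m q' = x ∧
          Below q' ((0 : Fin 1), i) ∧ Below ((0 : Fin 1), i + 1) q'} = ∅ := by
        ext q'
        simp only [Set.mem_setOf_eq, Set.mem_empty_iff_false, iff_false, not_and]
        intro _ _ hb1 hb2
        rw [below_iff] at hb1
        rw [below_iff] at hb2
        omega
      have hB : {q' : Pos 1 | Addable m q' ∧ resAdd v m q' = x ∧
          Below q' ((0 : Fin 1), i) ∧ Below ((0 : Fin 1), i + 1) q'} = ∅ := by
        ext q'
        simp only [Set.mem_setOf_eq, Set.mem_empty_iff_false, iff_false, not_and]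
        intro _ _ hb1 hb2
        rw [below_iff] at hb1
        rw [below_iff] at hb2
        omega
      rw [hA, hB, Set.ncard_empty] at hcount
      exact absurd hcount (lt_irrefl 0)
    · rcases eq_or_ne (i + 1) t with h4 | h4
      · rw [h2 i h1, h4, h3]
        have h5 := ih i hez
        rw [h4] at h5
        omega
      · rw [h2 i h1, h2 (i+1) h4]
        exact ih i hez

/-- Backward direction: e-restricted implies Kleshchev (by strong induction on size). -/
lemma erestricted_to_kleshchev {e : ℕ} (he : e = 0 ∨ 2 ≤ e) (v : Fin 1 → ZMod e) :
    ∀ n (l : MultiPartition 1), size l = n → ERestricted e (l.part 0) → Kleshchev v l := by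
  intro n
  induction n using Nat.strong_induction_on with
  | _ n ih =>
    intro l hn hr
    by_cases h0 : l.part 0 = 0
    · exact Kleshchev.empty l (fun s => by rw [fin1_eq s]; exact h0)
    -- setup
    have hne : (l.part 0).support.Nonempty := Finsupp.support_nonempty_iff.mpr h0
    set f := l.part 0 with hfdef
    set tm := f.support.max' hne with htmdef
    have htm : f tm ≠ 0 := Finsupp.mem_support_iff.mp (f.support.max'_mem hne)
    have hzero : ∀ i, tm < i → f i = 0 := by
      intro i hi
      by_contra hc
      have := f.support.le_max' i (Finsupp.mem_support_iff.mpr hc)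
      omega
    have hremm : Removable l ((0 : Fin 1), tm) := by
      show f (tm + 1) < f tm
      rw [hzero (tm + 1) (by omega)]
      omega
    have hftm1 : 1 ≤ f tm := by omega
    set x := resRem v l ((0 : Fin 1), tm) with hxdef
    -- the bottom removable node is normal
    have hnormm : Normal v l ((0 : Fin 1), tm) x := by
      refine ⟨hremm, rfl, ?_⟩
      intro q hqa hqr hqb
      exfalso
      obtain ⟨g1, g⟩ := q
      have hg1 : g1 = 0 := fin1_eq g1
      subst hg1
      rw [below_iff] at hqb
      rcases hqa with hg0 | hlt
      · simp only at hg0; omega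
      · have hfg : f g = 0 := hzero g hqb
        have hfg1 : f (g - 1) ≠ 0 := by
          intro hc
          rw [hfg, hc] at hlt
          exact absurd hlt (lt_irrefl 0)
        have hgle : g - 1 ≤ tm := by
          by_contra hc
          exact hfg1 (hzero (g - 1) (by omega))
        have hgeq : g = tm + 1 := by omega
        subst hgeq
        -- residue computation gives (f tm : ZMod e) = 0
        have hres : ((f (tm + 1) : ℕ) : ZMod e) - ((tm + 1 : ℕ) : ZMod e) + v 0
            = ((f tm - 1 : ℕ) : ZMod e) - (tm : ZMod e) + v 0 := hqr
        rw [hzero (tm + 1) (by omega), Nat.cast_sub hftm1] at hres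
        push_cast at hres
        have hcast : ((f tm : ℕ) : ZMod e) = 0 := by linear_combination -hres
        refine myCastNeZero (by omega) ?_ hcast
        intro hez
        have := hr tm hez
        rw [hzero (tm + 1) (by omega)] at this
        omega
    -- the good node: minimal row among normal rows
    set S : Set ℕ := {i : ℕ | Normal v l ((0 : Fin 1), i) x} with hSdef
    have hSne : S.Nonempty := ⟨tm, hnormm⟩
    set t := sInf S with htdef
    have hp : Normal v l ((0 : Fin 1), t) x := Nat.sInf_mem hSne
    have hgood : Good v l ((0 : Fin 1), t) x := by
      refine ⟨hp, ?_⟩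
      intro q hq hbel
      obtain ⟨q1, i⟩ := q
      have hq1 : q1 = 0 := fin1_eq q1
      subst hq1
      rw [below_iff] at hbel
      have : t ≤ i := Nat.sInf_le hq
      omega
    have hrem : Removable l ((0 : Fin 1), t) := hp.1
    have hfrem : f (t + 1) < f t := hrem
    have hft1 : 1 ≤ f t := by omega
    -- the addable node in the same row t never has residue x
    have hno_add_t : resAdd v l ((0 : Fin 1), t) ≠ x := by
      intro hcc
      rw [← hp.2.1] at hcc
      have hcc' : ((f t : ℕ) : ZMod e) - (t : ZMod e) + v 0
          = ((f t - 1 : ℕ) : ZMod e) - (t : ZMod e) + v 0 := hcc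
      rw [Nat.cast_sub hft1] at hcc'
      push_cast at hcc'
      exact myOneNeZero he (by linear_combination hcc')
    -- key: removing the good node keeps the partition e-restricted
    have hkey : e ≠ 0 → 1 ≤ t → f (t - 1) - f t + 2 ≤ e := by
      intro hez ht1
      by_contra hcon
      have he2 : 2 ≤ e := by rcases he with rfl | he' <;> omega
      have hr1 : f (t - 1) - f t < e := by
        have := hr (t - 1) hez
        rw [Nat.sub_add_cancel ht1] at this
        exact this
      have hmono : f t ≤ f (t - 1) := by
        have := l.mono 0 (t - 1)
        rw [Nat.sub_add_cancel ht1] at this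
        exact this
      have heq : f (t - 1) = f t + (e - 1) := by omega
      -- the removable node in row t-1 has residue x
      have hremq : Removable l ((0 : Fin 1), t - 1) := by
        show f ((t - 1) + 1) < f (t - 1)
        rw [Nat.sub_add_cancel ht1]
        omega
      have hresq : resRem v l ((0 : Fin 1), t - 1) = x := by
        rw [← hp.2.1]
        show ((f (t-1) - 1 : ℕ) : ZMod e) - ((t - 1 : ℕ) : ZMod e) + v 0
            = ((f t - 1 : ℕ) : ZMod e) - (t : ZMod e) + v 0
        rw [show f (t-1) - 1 = f t + (e - 2) by omega, Nat.cast_add,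
          Nat.cast_sub he2, Nat.cast_sub ht1, Nat.cast_sub hft1, ZMod.natCast_self]
        push_cast
        ring
      -- that node is normal, contradicting goodness of (0, t)
      have hqnorm : Normal v l ((0 : Fin 1), t - 1) x := by
        refine ⟨hremq, hresq, ?_⟩
        intro γ hγa hγr hγb
        obtain ⟨g1, g⟩ := γ
        have hg1 : g1 = 0 := fin1_eq g1
        subst hg1
        rw [below_iff] at hγb
        have hgt : t < g := by
          rcases eq_or_lt_of_le (show t ≤ g by omega) with hgg | hgg
          · exfalso; rw [← hgg] at hγr; exact hno_add_t hγr
          · exact hgg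
        have hcount := hp.2.2 ((0 : Fin 1), g) hγa hγr (below_iff.mpr hgt)
        have hAA : {q' : Pos 1 | Removable l q' ∧ resRem v l q' = x ∧
            Below q' ((0 : Fin 1), t - 1) ∧ Below ((0 : Fin 1), g) q'}
            = insert ((0 : Fin 1), t) {q' : Pos 1 | Removable l q' ∧ resRem v l q' = x ∧
              Below q' ((0 : Fin 1), t) ∧ Below ((0 : Fin 1), g) q'} := by
          ext ⟨a, i⟩
          have ha : a = 0 := fin1_eq a
          subst ha
          simp only [Set.mem_setOf_eq, Set.mem_insert_iff, below_iff, Prod.mk.injEq,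
            true_and]
          constructor
          · rintro ⟨h1, h2', h3, h4⟩
            rcases eq_or_ne i t with rfl | hne
            · exact Or.inl rfl
            · exact Or.inr ⟨h1, h2', by omega, h4⟩
          · rintro (rfl | ⟨h1, h2', h3, h4⟩)
            · exact ⟨hp.1, hp.2.1, by omega, hgt⟩
            · exact ⟨h1, h2', by omega, h4⟩
        have hBB : {q' : Pos 1 | Addable l q' ∧ resAdd v l q' = x ∧
            Below q' ((0 : Fin 1), t - 1) ∧ Below ((0 : Fin 1), g) q'}
            = {q' : Pos 1 | Addable l q' ∧ resAdd v l q' = x ∧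
              Below q' ((0 : Fin 1), t) ∧ Below ((0 : Fin 1), g) q'} := by
          ext ⟨a, i⟩
          have ha : a = 0 := fin1_eq a
          subst ha
          simp only [Set.mem_setOf_eq, below_iff]
          constructor
          · rintro ⟨h1, h2', h3, h4⟩
            refine ⟨h1, h2', ?_, h4⟩
            rcases eq_or_ne i t with rfl | hne
            · exact absurd h2' hno_add_t
            · omega
          · rintro ⟨h1, h2', h3, h4⟩
            exact ⟨h1, h2', by omega, h4⟩
        have hfin : {q' : Pos 1 | Removable l q' ∧ resRem v l q' = x ∧
            Below q' ((0 : Fin 1), t) ∧ Below ((0 : Fin 1), g) q'}.Finite :=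
          finite_pos _ g (fun q' hq' => below_iff.mp hq'.2.2.2)
        have hmem : ((0 : Fin 1), t) ∉ {q' : Pos 1 | Removable l q' ∧ resRem v l q' = x ∧
            Below q' ((0 : Fin 1), t) ∧ Below ((0 : Fin 1), g) q'} := by
          intro hc
          exact absurd (below_iff.mp hc.2.2.1) (lt_irrefl t)
        rw [hAA, hBB, Set.ncard_insert_of_notMem hmem hfin]
        omega
      exact hgood.2 ((0 : Fin 1), t - 1) hqnorm (below_iff.mpr (by omega))
    -- construct the smaller partition
    set f' : ℕ →₀ ℕ := f - Finsupp.single t 1 with hf'def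
    have hf' : ∀ i, f' i = if i = t then f t - 1 else f i := by
      intro i
      rw [hf'def, Finsupp.tsub_apply, Finsupp.single_apply]
      rcases eq_or_ne t i with rfl | hne
      · simp
      · rw [if_neg hne, if_neg (Ne.symm hne)]
        omega
    have hmono' : ∀ i, f' (i + 1) ≤ f' i := by
      intro i
      have h1 := l.mono 0 i
      rw [hf' (i + 1), hf' i]
      rcases eq_or_ne i t with rfl | hne
      · rw [if_neg (by omega), if_pos rfl]
        omega
      · rw [if_neg hne]
        rcases eq_or_ne (i + 1) t with h2 | h2
        · rw [if_pos h2]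
          have h1' : f t ≤ f i := by rw [← h2]; exact h1
          omega
        · rw [if_neg h2]
          exact h1
    set l' : MultiPartition 1 := ⟨fun _ => f', fun _ i => hmono' i⟩ with hl'def
    have hl'part : l'.part 0 = f' := rfl
    have hAdd : AddNode l' l ((0 : Fin 1), t) := by
      refine ⟨?_, ?_, ?_⟩
      · intro s hs
        exact absurd (fin1_eq s) hs
      · intro i hi
        show f i = f' i
        rw [hf' i, if_neg hi]
      · show f t = f' t + 1
        rw [hf' t, if_pos rfl]
        omega
    have hrest' : ERestricted e (l'.part 0) := by
      intro i hez
      show f' i - f' (i + 1) < e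
      have he2 : 2 ≤ e := by rcases he with rfl | he' <;> omega
      rw [hf' i, hf' (i + 1)]
      rcases eq_or_ne i t with rfl | h1
      · rw [if_pos rfl, if_neg (by omega)]
        have := hr t hez
        omega
      · rw [if_neg h1]
        rcases eq_or_ne (i + 1) t with h2 | h2
        · rw [if_pos h2]
          have hk := hkey hez (by omega)
          have hti : t - 1 = i := by omega
          rw [hti] at hk
          have h5 : f (i + 1) = f t := by rw [h2]
          omega
        · rw [if_neg h2]
          exact hr i hez
    -- size decreases
    have hfe : f = f' + Finsupp.single t 1 := by
      ext i
      rw [Finsupp.add_apply, hf' i, Finsupp.single_apply]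
      rcases eq_or_ne i t with rfl | hne
      · rw [if_pos rfl, if_pos rfl]
        omega
      · rw [if_neg hne, if_neg (fun h => hne h.symm)]
        omega
    have hsz : ∀ m : MultiPartition 1, size m = (m.part 0).sum fun _ v => v := by
      intro m
      simp [size]
    have hsl : size l = size l' + 1 := by
      rw [hsz l, hsz l', hl'part, ← hfdef, hfe,
        Finsupp.sum_add_index' (fun _ => rfl) (fun _ _ _ => rfl),
        Finsupp.sum_single_index rfl]
    have hkl' : Kleshchev v l' :=
      ih (size l') (by omega) l' rfl hrest'
    exact Kleshchev.step l' l ((0 : Fin 1), t) x hkl' hAdd hgood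

end KleshchevAux

/-- for `r = 1`, the Kleshchev partitions of `n` are exactly the
`e`-restricted partitions of `n`. -/
theorem kleshchev_r_one_iff_erestricted {e n : ℕ} (he : e = 0 ∨ 2 ≤ e)
    (v : Fin 1 → ZMod e) (l : MultiPartition 1) (hn : size l = n) :
    Kleshchev v l ↔ ERestricted e (l.part 0) := by
  constructor
  · exact KleshchevAux.kleshchev_to_erestricted he v
  · exact fun h => KleshchevAux.erestricted_to_kleshchev he v (size l) l rfl h
end
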